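/- Let 0 < C < 1, let k ≥ 2, let D : ℝ² → ℝ be continuous, circularly symmetric, nonnegative, not identically zero, and supported in the closed ball of radius r > 0 centered at the origin, and let X₀ = ∑_{j=1}^k α_j δ_{w_j} with α_j > 0 and pairwise separations ‖w_i − w_j‖₂ ≥ (2/C)·k²·r for all i ≠ j. Let θ₁, θ₂, θ₃ be independent and uniformly distributed on [−π, π). Then, with probability at least 1 − C over (θ₁, θ₂, θ₃), the measure X₀ is the unique minimizer of total variation among all finitely-atomic signed Borel measures X on ℝ² satisfying L_{θᵢ}[D∗X](t) = L_{θᵢ}[D∗X₀](t) for i = 1, 2, 3 and all t ∈ ℝ. -/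

import Mathlib

noncomputable section
open MeasureTheory

/-- Probe direction `u_θ = (cos θ, sin θ)`. -/
def uvec (θ : ℝ) : ℝ × ℝ := (Real.cos θ, Real.sin θ)

/-- Sweep direction `u_θ^⊥ = (sin θ, -cos θ)`. -/
def uperp (θ : ℝ) : ℝ × ℝ := (Real.sin θ, -Real.cos θ)

/-- Euclidean inner product on ℝ². -/
def dot2 (a b : ℝ × ℝ) : ℝ := a.1 * b.1 + a.2 * b.2

/-- Euclidean norm on ℝ². -/
def norm2 (a : ℝ × ℝ) : ℝ := Real.sqrt (a.1 ^ 2 + a.2 ^ 2)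

/-- Line projection at angle θ: `L_θ[Y](t) = ∫ Y(s·u_θ + t·u_θ^⊥) ds`. -/
def lineProj (Y : ℝ × ℝ → ℝ) (θ t : ℝ) : ℝ := ∫ s : ℝ, Y (s • uvec θ + t • uperp θ)
/-- Signed Dirac measure at `w`. -/
def diracS (w : ℝ × ℝ) : SignedMeasure (ℝ × ℝ) := (Measure.dirac w).toSignedMeasure

/-- Integral of a function against a finite signed measure (via Jordan decomposition);
used to define the convolution `(D ∗ X)(y) = ∫ D(y - w) dX(w)`. -/
def sInt (X : SignedMeasure (ℝ × ℝ)) (f : ℝ × ℝ → ℝ) : ℝ :=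
  (∫ w, f w ∂X.toJordanDecomposition.posPart) - ∫ w, f w ∂X.toJordanDecomposition.negPart

/-- Uniform probability measure on `[-π, π)`. -/
def unif : Measure ℝ :=
  (ENNReal.ofReal (1 / (2 * Real.pi))) • (volume.restrict (Set.Ico (-Real.pi) Real.pi))

attribute [local instance] Classical.propDecidable


lemma sincos_fiber_countable (c d : ℝ) :
    Set.Countable {t : ℝ | Real.sin t = c ∧ Real.cos t = d} := by
  rcases Set.eq_empty_or_nonempty {t : ℝ | Real.sin t = c ∧ Real.cos t = d} with h | ⟨t₀, ht₀⟩
  · simp [h]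
  · have hsub : {t : ℝ | Real.sin t = c ∧ Real.cos t = d} ⊆
        Set.range (fun n : ℤ => t₀ + n * (2 * Real.pi)) := by
      intro t ⟨hs, hc⟩
      have hcos : Real.cos (t - t₀) = 1 := by
        rw [Real.cos_sub, hc, hs, ht₀.1, ht₀.2]
        have := Real.sin_sq_add_cos_sq t₀
        rw [ht₀.1, ht₀.2] at this
        nlinarith
      obtain ⟨n, hn⟩ := (Real.cos_eq_one_iff _).1 hcos
      refine ⟨n, ?_⟩
      show t₀ + (n : ℝ) * (2 * Real.pi) = t
      linarith
    exact Set.Countable.mono hsub (Set.countable_range _)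

/-- zero set of a nontrivial sinusoid is countable, hence null -/
lemma sinusoid_countable (a b : ℝ) (hab : ¬ (a = 0 ∧ b = 0)) :
    Set.Countable {t : ℝ | a * Real.sin t + b * Real.cos t = 0} := by
  have hR : 0 < a ^ 2 + b ^ 2 := by
    rcases not_and_or.1 hab with h | h
    · positivity
    · positivity
  set R := Real.sqrt (a ^ 2 + b ^ 2) with hRdef
  have hR2 : R ^ 2 = a ^ 2 + b ^ 2 := Real.sq_sqrt hR.le
  have hsub : {t : ℝ | a * Real.sin t + b * Real.cos t = 0} ⊆
      {t : ℝ | Real.sin t = -b * R / (a ^ 2 + b ^ 2) ∧ Real.cos t = a * R / (a ^ 2 + b ^ 2)}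
      ∪ {t : ℝ | Real.sin t = -b * (-R) / (a ^ 2 + b ^ 2) ∧
          Real.cos t = a * (-R) / (a ^ 2 + b ^ 2)} := by
    intro t ht
    simp only [Set.mem_setOf_eq] at ht
    have hxy : Real.sin t ^ 2 + Real.cos t ^ 2 = 1 := Real.sin_sq_add_cos_sq t
    have hk2 : (a * Real.cos t - b * Real.sin t) ^ 2 = R ^ 2 := by rw [hR2]; nlinarith
    have hk : a * Real.cos t - b * Real.sin t = R ∨ a * Real.cos t - b * Real.sin t = -R :=
      sq_eq_sq_iff_eq_or_eq_neg.mp hk2 |>.imp id id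
    rcases hk with hk | hk
    · left
      refine ⟨?_, ?_⟩
      · rw [eq_div_iff hR.ne']; linear_combination a * ht - b * hk
      · rw [eq_div_iff hR.ne']; linear_combination b * ht + a * hk
    · right
      refine ⟨?_, ?_⟩
      · rw [eq_div_iff hR.ne']; linear_combination a * ht - b * hk
      · rw [eq_div_iff hR.ne']; linear_combination b * ht + a * hk
  exact Set.Countable.mono hsub
    ((sincos_fiber_countable _ _).union (sincos_fiber_countable _ _))

lemma sinusoid_null (a b : ℝ) (hab : ¬ (a = 0 ∧ b = 0)) :
    volume {t : ℝ | a * Real.sin t + b * Real.cos t = 0} = 0 :=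
  (sinusoid_countable a b hab).measure_zero _


lemma unif_null {s : Set ℝ} (h : volume s = 0) : unif s = 0 := by
  have h2 : (volume.restrict (Set.Ico (-Real.pi) Real.pi)) s = 0 :=
    le_antisymm (h ▸ Measure.restrict_le_self s) (by positivity)
  simp [unif, h2]

lemma unif_univ : unif Set.univ = 1 := by
  have hpi := Real.pi_pos
  simp only [unif, Measure.smul_apply, Measure.restrict_apply MeasurableSet.univ,
    Set.univ_inter, Real.volume_Ico, smul_eq_mul]
  rw [← ENNReal.ofReal_mul (by positivity)]
  rw [show Real.pi - -Real.pi = 2 * Real.pi by ring]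
  rw [one_div, inv_mul_cancel₀ (by positivity)]
  simp

instance : IsProbabilityMeasure unif := ⟨unif_univ⟩

lemma update_mem_slice {i : Fin 3} (x : Fin 2 → ℝ) (t : ℝ) (S : Set (Fin 3 → ℝ)) :
    i.insertNth t x ∈ S ↔ Function.update (i.insertNth 0 x) i t ∈ S := by
  rw [Fin.update_insertNth]

lemma pi3_null_slice (i : Fin 3) (S : Set (Fin 3 → ℝ)) (hS : MeasurableSet S)
    (h : ∀ θ : Fin 3 → ℝ, volume {t : ℝ | Function.update θ i t ∈ S} = 0) :
    Measure.pi (fun _ : Fin 3 => unif) S = 0 := by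
  set e := MeasurableEquiv.piFinSuccAbove (fun _ : Fin 3 => ℝ) i with he
  have hmp := measurePreserving_piFinSuccAbove (fun _ : Fin 3 => unif) i
  set T : Set (ℝ × (Fin 2 → ℝ)) := e.symm ⁻¹' S with hT
  have hTm : MeasurableSet T := e.symm.measurable hS
  have h1 : Measure.pi (fun _ : Fin 3 => unif) S =
      (unif.prod (Measure.pi fun _ : Fin 2 => unif)) T := by
    have : S = e ⁻¹' T := by
      rw [hT, ← Set.preimage_comp]
      simp
    rw [this]
    exact hmp.measure_preimage hTm.nullMeasurableSet
  rw [h1]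
  set U : Set ((Fin 2 → ℝ) × ℝ) := Prod.swap ⁻¹' T with hU
  have hUm : MeasurableSet U := measurable_swap hTm
  have h2 : (unif.prod (Measure.pi fun _ : Fin 2 => unif)) T =
      ((Measure.pi fun _ : Fin 2 => unif).prod unif) U := by
    rw [← Measure.prod_swap, Measure.map_apply measurable_swap hTm]
  rw [h2]
  rw [Measure.measure_prod_null hUm]
  refine Filter.Eventually.of_forall fun x => ?_
  have hslice : (Prod.mk x ⁻¹' U) = {t : ℝ | Function.update (i.insertNth 0 x) i t ∈ S} := by
    ext t
    simp only [hU, hT, Set.mem_preimage, Set.mem_setOf_eq, Prod.swap_prod_mk]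
    have : e.symm (t, x) = i.insertNth t x := rfl
    rw [this, update_mem_slice]
  simp only [Pi.zero_apply]
  rw [hslice]
  exact unif_null (h _)



/-- integrable against every finite measure -/
def IntAll (f : ℝ × ℝ → ℝ) : Prop :=
  ∀ μ : Measure (ℝ × ℝ), IsFiniteMeasure μ → Integrable f μ

lemma intAll_of_bounded {f : ℝ × ℝ → ℝ} (hf : Continuous f) (M : ℝ)
    (hM : ∀ z, |f z| ≤ M) : IntAll f := by
  intro μ hμ
  refine Integrable.mono' (integrable_const M) hf.aestronglyMeasurable ?_
  exact Filter.Eventually.of_forall fun z => by simpa [Real.norm_eq_abs] using hM z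

lemma tsm_inj {μ ν : Measure (ℝ × ℝ)} [IsFiniteMeasure μ] [IsFiniteMeasure ν]
    (h : μ.toSignedMeasure = ν.toSignedMeasure) : μ = ν := by
  ext s hs
  have := congrArg (fun m : SignedMeasure (ℝ × ℝ) => m s) h
  simp only [Measure.toSignedMeasure_apply_measurable hs] at this
  exact (ENNReal.toReal_eq_toReal_iff' (measure_ne_top μ s) (measure_ne_top ν s)).mp this

lemma toJD_tsm (μ : Measure (ℝ × ℝ)) [IsFiniteMeasure μ] :
    μ.toSignedMeasure.toJordanDecomposition =
      ⟨μ, 0, Measure.MutuallySingular.zero_right⟩ := by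
  apply JordanDecomposition.toSignedMeasure_injective
  rw [SignedMeasure.toSignedMeasure_toJordanDecomposition]
  show μ.toSignedMeasure = μ.toSignedMeasure - (0 : Measure (ℝ × ℝ)).toSignedMeasure
  rw [Measure.toSignedMeasure_zero, sub_zero]

lemma sInt_tsm (μ : Measure (ℝ × ℝ)) [IsFiniteMeasure μ] (f : ℝ × ℝ → ℝ) :
    sInt μ.toSignedMeasure f = ∫ x, f x ∂μ := by
  rw [sInt, toJD_tsm]
  simp

lemma sInt_dirac {f : ℝ × ℝ → ℝ} (hf : Continuous f) (v : ℝ × ℝ) :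
    sInt (diracS v) f = f v := by
  rw [diracS, sInt_tsm]
  exact integral_dirac' f v hf.stronglyMeasurable

lemma sInt_add {f : ℝ × ℝ → ℝ} (hf : IntAll f) (X Y : SignedMeasure (ℝ × ℝ)) :
    sInt (X + Y) f = sInt X f + sInt Y f := by
  have key : (X + Y).toJordanDecomposition.posPart + X.toJordanDecomposition.negPart
        + Y.toJordanDecomposition.negPart
      = (X + Y).toJordanDecomposition.negPart + X.toJordanDecomposition.posPart
        + Y.toJordanDecomposition.posPart := by
    apply tsm_inj
    rw [Measure.toSignedMeasure_add, Measure.toSignedMeasure_add,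
      Measure.toSignedMeasure_add, Measure.toSignedMeasure_add]
    have e1 := SignedMeasure.toSignedMeasure_toJordanDecomposition (X + Y)
    have e2 := SignedMeasure.toSignedMeasure_toJordanDecomposition X
    have e3 := SignedMeasure.toSignedMeasure_toJordanDecomposition Y
    rw [JordanDecomposition.toSignedMeasure] at e1 e2 e3
    have : X + Y = X + Y := rfl
    -- rearrange: a - b = (c - d) + (e - f) → a + d + f = b + c + e
    linear_combination (norm := abel) e1 - e2 - e3
  have := congrArg (fun m : Measure (ℝ × ℝ) => ∫ x, f x ∂m) key
  simp only [integral_add_measure, hf _ inferInstance,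
    integral_add_measure (hf _ inferInstance) (hf _ inferInstance)] at this
  rw [sInt, sInt, sInt]
  linarith

lemma sInt_zero (f : ℝ × ℝ → ℝ) : sInt 0 f = 0 := by
  rw [sInt, SignedMeasure.toJordanDecomposition_zero]
  simp

lemma sInt_smul {f : ℝ × ℝ → ℝ} (hf : IntAll f) (a : ℝ) (X : SignedMeasure (ℝ × ℝ)) :
    sInt (a • X) f = a * sInt X f := by
  rw [sInt, sInt, SignedMeasure.toJordanDecomposition_smul_real]
  rcases le_or_gt 0 a with ha | ha
  · rw [JordanDecomposition.real_smul_posPart_nonneg _ _ ha,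
      JordanDecomposition.real_smul_negPart_nonneg _ _ ha]
    rw [integral_smul_nnreal_measure, integral_smul_nnreal_measure]
    simp only [NNReal.smul_def, Real.coe_toNNReal _ ha, smul_eq_mul]
    ring
  · rw [JordanDecomposition.real_smul_posPart_neg _ _ ha,
      JordanDecomposition.real_smul_negPart_neg _ _ ha]
    rw [integral_smul_nnreal_measure, integral_smul_nnreal_measure]
    simp only [NNReal.smul_def, Real.coe_toNNReal _ (by linarith : (0:ℝ) ≤ -a), smul_eq_mul]
    ring


lemma abs_fst_le_norm2 (a : ℝ × ℝ) : |a.1| ≤ norm2 a := by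
  rw [norm2, ← Real.sqrt_sq_eq_abs]
  exact Real.sqrt_le_sqrt (by nlinarith)

lemma abs_snd_le_norm2 (a : ℝ × ℝ) : |a.2| ≤ norm2 a := by
  rw [norm2, ← Real.sqrt_sq_eq_abs]
  exact Real.sqrt_le_sqrt (by nlinarith)

lemma continuous_norm2 : Continuous norm2 := by
  unfold norm2; fun_prop

lemma norm2_nonneg (a : ℝ × ℝ) : 0 ≤ norm2 a := Real.sqrt_nonneg _

lemma norm2_eq_zero {a : ℝ × ℝ} (h : norm2 a = 0) : a = 0 := by
  have h1 : |a.1| ≤ 0 := h ▸ abs_fst_le_norm2 a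
  have h2 : |a.2| ≤ 0 := h ▸ abs_snd_le_norm2 a
  have : a.1 = 0 := abs_nonpos_iff.mp h1
  have : a.2 = 0 := abs_nonpos_iff.mp h2
  exact Prod.ext ‹a.1 = 0› ‹a.2 = 0›

section Dstuff
variable {D : ℝ × ℝ → ℝ} {f : ℝ → ℝ} {r : ℝ}

lemma D_bound (hD_cont : Continuous D) (hD_supp : ∀ z, r < norm2 z → D z = 0) :
    ∃ M : ℝ, ∀ z, |D z| ≤ M := by
  have hclosed : IsClosed {z : ℝ × ℝ | norm2 z ≤ r} :=
    isClosed_le continuous_norm2 continuous_const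
  have hbdd : Bornology.IsBounded {z : ℝ × ℝ | norm2 z ≤ r} := by
    apply Bornology.IsBounded.subset (Metric.isBounded_closedBall (x := (0 : ℝ × ℝ)) (r := r))
    intro z hz
    simp only [Metric.mem_closedBall, dist_zero_right]
    calc ‖z‖ = max ‖z.1‖ ‖z.2‖ := rfl
      _ ≤ norm2 z := max_le ((Real.norm_eq_abs _) ▸ abs_fst_le_norm2 z)
          ((Real.norm_eq_abs _) ▸ abs_snd_le_norm2 z)
      _ ≤ r := hz
  have hK := Metric.isCompact_of_isClosed_isBounded hclosed hbdd
  obtain ⟨M, hM⟩ := hK.exists_bound_of_continuousOn hD_cont.continuousOn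
  refine ⟨max M 0, fun z => ?_⟩
  by_cases hz : norm2 z ≤ r
  · exact le_max_of_le_left ((Real.norm_eq_abs _) ▸ hM z hz)
  · rw [hD_supp z (not_le.1 hz)]; simp

/-- the 1-D profile of D -/
def gprof (D : ℝ × ℝ → ℝ) (τ : ℝ) : ℝ := ∫ s : ℝ, D (s, τ)

lemma integrable_D_line (hD_cont : Continuous D)
    (hD_supp : ∀ z, r < norm2 z → D z = 0) (τ : ℝ) :
    Integrable (fun s : ℝ => D (s, τ)) := by
  apply Continuous.integrable_of_hasCompactSupport (by fun_prop)
  apply HasCompactSupport.intro (isCompact_Icc (a := -r) (b := r))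
  intro s hs
  apply hD_supp
  simp only [Set.mem_Icc, not_and_or, not_le] at hs
  have habs : r < |s| := lt_abs.mpr (hs.elim (fun h => Or.inr (by linarith)) Or.inl)
  exact lt_of_lt_of_le habs (by simpa using abs_fst_le_norm2 (s, τ))

lemma gprof_zero_of_abs_gt (hD_supp : ∀ z, r < norm2 z → D z = 0) {τ : ℝ} (hτ : r < |τ|) :
    gprof D τ = 0 := by
  rw [gprof]
  have : ∀ s : ℝ, D (s, τ) = 0 := fun s =>
    hD_supp _ (lt_of_lt_of_le hτ (by simpa using abs_snd_le_norm2 (s, τ)))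
  simp [this]

lemma gprof_ne_zero (hD_cont : Continuous D) (hD_nonneg : ∀ z, 0 ≤ D z)
    (hD_ne : D ≠ 0) (hD_supp : ∀ z, r < norm2 z → D z = 0) :
    ∃ τ, gprof D τ ≠ 0 := by
  obtain ⟨y₀, hy₀⟩ : ∃ y, D y ≠ 0 := by
    by_contra h
    push_neg at h
    exact hD_ne (funext fun y => h y)
  refine ⟨y₀.2, ne_of_gt ?_⟩
  rw [gprof]
  rw [integral_pos_iff_support_of_nonneg (fun s => hD_nonneg _)
    (integrable_D_line hD_cont hD_supp _)]
  have hU : IsOpen {s : ℝ | D (s, y₀.2) ≠ 0} :=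
    isOpen_ne.preimage (by fun_prop)
  have hsub : {s : ℝ | D (s, y₀.2) ≠ 0} ⊆ Function.support fun s => D (s, y₀.2) :=
    fun s hs => hs
  have : 0 < volume {s : ℝ | D (s, y₀.2) ≠ 0} :=
    hU.measure_pos volume ⟨y₀.1, by simpa using hy₀⟩
  exact lt_of_lt_of_le this (measure_mono hsub)

lemma point_decomp (θ : ℝ) (s t : ℝ) (v : ℝ × ℝ)
    (hD_circ : ∀ z, D z = f (norm2 z)) :
    D (s • uvec θ + t • uperp θ - v)
      = D (s - dot2 v (uvec θ), t - dot2 v (uperp θ)) := by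
  rw [hD_circ, hD_circ]
  congr 1
  rw [norm2, norm2]
  congr 1
  have hpyth := Real.sin_sq_add_cos_sq θ
  simp only [uvec, uperp, dot2, Prod.smul_mk, smul_eq_mul, Prod.mk_add_mk, Prod.mk_sub_mk,
    Prod.fst_add, Prod.snd_add, Prod.fst_sub, Prod.snd_sub]
  ring_nf
  nlinarith [hpyth]

lemma lineProj_single (hD_cont : Continuous D) (hD_circ : ∀ z, D z = f (norm2 z))
    (hD_supp : ∀ z, r < norm2 z → D z = 0) (v : ℝ × ℝ) (θ t : ℝ) :
    lineProj (fun y => D (y - v)) θ t = gprof D (t - dot2 v (uperp θ)) := by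
  rw [lineProj]
  have h1 : (fun s : ℝ => D (s • uvec θ + t • uperp θ - v))
      = fun s : ℝ => D (s - dot2 v (uvec θ), t - dot2 v (uperp θ)) := by
    funext s; exact point_decomp θ s t v hD_circ
  rw [h1]
  rw [integral_sub_right_eq_self (fun s : ℝ => D (s, t - dot2 v (uperp θ))) (dot2 v (uvec θ))]
  rfl

end Dstuff

lemma translates_indep (g : ℝ → ℝ) (sS : ℝ)
    (h0 : ∀ x, sS < x → g x = 0)
    (hne : ∀ ε, 0 < ε → ∃ τ, sS - ε < τ ∧ g τ ≠ 0) :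
    ∀ (S : Finset ℝ) (h : ℝ → ℝ), (∀ t, ∑ c ∈ S, h c * g (t - c) = 0) → ∀ c ∈ S, h c = 0 := by
  intro S
  induction S using Finset.strongInduction with
  | _ S ih =>
    intro h hsum c hc
    have hSne : S.Nonempty := ⟨c, hc⟩
    set M := S.max' hSne with hM
    by_cases hefull : (S.erase M).Nonempty
    case neg =>
      -- S = {M}, and c = M
      have hcM : c = M := by
        by_contra hne'
        exact hefull ⟨c, Finset.mem_erase.mpr ⟨hne', hc⟩⟩
      obtain ⟨τ, hτ1, hτ2⟩ := hne 1 one_pos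
      have h1 := hsum (M + τ)
      rw [← Finset.add_sum_erase _ _ (S.max'_mem hSne)] at h1
      rw [Finset.not_nonempty_iff_eq_empty.mp hefull] at h1
      simp only [Finset.sum_empty, add_zero, add_sub_cancel_left] at h1
      rw [hcM]
      exact (mul_eq_zero.mp h1).resolve_right (by rwa [← hM, add_sub_cancel_left])
    case pos =>
      set ε : ℝ := M - (S.erase M).max' hefull with hε
      have hmaxlt : (S.erase M).max' hefull < M := by
        have hmem := (S.erase M).max'_mem hefull
        have hle : (S.erase M).max' hefull ≤ M :=
          S.le_max' _ (Finset.mem_of_mem_erase hmem)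
        have hne' : (S.erase M).max' hefull ≠ M := (Finset.mem_erase.mp hmem).1
        exact lt_of_le_of_ne hle hne'
      have hεpos : 0 < ε := by rw [hε]; linarith
      have hgap : ∀ c' ∈ S.erase M, c' ≤ M - ε := by
        intro c' hc'
        have := (S.erase M).le_max' c' hc'
        rw [hε]; linarith
      obtain ⟨τ, hτ1, hτ2⟩ := hne ε hεpos
      have hM0 : h M = 0 := by
        have h1 := hsum (M + τ)
        rw [← Finset.add_sum_erase _ _ (S.max'_mem hSne)] at h1
        have hz : ∀ c' ∈ S.erase M, h c' * g (M + τ - c') = 0 := by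
          intro c' hc'
          rw [h0 _ (by have := hgap c' hc'; linarith), mul_zero]
        rw [Finset.sum_eq_zero hz, add_zero, add_sub_cancel_left] at h1
        exact (mul_eq_zero.mp h1).resolve_right hτ2
      by_cases hcM : c = M
      · rw [hcM]; exact hM0
      · refine ih (S.erase M) (Finset.erase_ssubset (S.max'_mem hSne)) h ?_ c
          (Finset.mem_erase.mpr ⟨hcM, hc⟩)
        intro t
        have h1 := hsum t
        rw [← Finset.add_sum_erase _ _ (S.max'_mem hSne), hM0, zero_mul, zero_add] at h1
        exact h1

lemma fiberwise_collect {β : Type*} [DecidableEq β]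
    (V : Finset β) (a : β → ℝ) (p : β → ℝ) (g : ℝ → ℝ) (S : Finset ℝ)
    (hmaps : ∀ v ∈ V, p v ∈ S) (t : ℝ) :
    ∑ c ∈ S, (∑ v ∈ V.filter (fun v => p v = c), a v) * g (t - c)
      = ∑ v ∈ V, a v * g (t - p v) := by
  rw [← Finset.sum_fiberwise_of_maps_to hmaps (fun v => a v * g (t - p v))]
  refine Finset.sum_congr rfl fun c _ => ?_
  rw [Finset.sum_mul]
  refine Finset.sum_congr rfl fun v hv => ?_
  rw [(Finset.mem_filter.mp hv).2]

lemma matching_fibers {β γ : Type*} [DecidableEq β] [DecidableEq γ]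
    (g : ℝ → ℝ) (sS : ℝ) (h0 : ∀ x, sS < x → g x = 0)
    (hne : ∀ ε, 0 < ε → ∃ τ, sS - ε < τ ∧ g τ ≠ 0)
    (V : Finset β) (a : β → ℝ) (p : β → ℝ) (W : Finset γ) (b : γ → ℝ) (q : γ → ℝ)
    (hcon : ∀ t, ∑ v ∈ V, a v * g (t - p v) = ∑ j ∈ W, b j * g (t - q j)) :
    ∀ c : ℝ, ∑ v ∈ V.filter (fun v => p v = c), a v
      = ∑ j ∈ W.filter (fun j => q j = c), b j := by
  classical
  set S : Finset ℝ := V.image p ∪ W.image q with hS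
  have hmapsV : ∀ v ∈ V, p v ∈ S := fun v hv =>
    Finset.mem_union_left _ (Finset.mem_image_of_mem p hv)
  have hmapsW : ∀ j ∈ W, q j ∈ S := fun j hj =>
    Finset.mem_union_right _ (Finset.mem_image_of_mem q hj)
  set h : ℝ → ℝ := fun c => (∑ v ∈ V.filter (fun v => p v = c), a v)
      - ∑ j ∈ W.filter (fun j => q j = c), b j with hh
  have hzero : ∀ c ∈ S, h c = 0 := by
    apply translates_indep g sS h0 hne S h
    intro t
    have : ∑ c ∈ S, h c * g (t - c)
        = (∑ c ∈ S, (∑ v ∈ V.filter (fun v => p v = c), a v) * g (t - c))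
          - ∑ c ∈ S, (∑ j ∈ W.filter (fun j => q j = c), b j) * g (t - c) := by
      rw [← Finset.sum_sub_distrib]
      refine Finset.sum_congr rfl fun c _ => ?_
      rw [hh, sub_mul]
    rw [this, fiberwise_collect V a p g S hmapsV t, fiberwise_collect W b q g S hmapsW t,
      hcon t, sub_self]
  intro c
  by_cases hcS : c ∈ S
  · have := hzero c hcS
    simp only [hh] at this
    linarith [this]
  · have h1 : V.filter (fun v => p v = c) = ∅ := by
      rw [Finset.filter_eq_empty_iff]
      intro v hv hpv
      exact hcS (hpv ▸ hmapsV v hv)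
    have h2 : W.filter (fun j => q j = c) = ∅ := by
      rw [Finset.filter_eq_empty_iff]
      intro j hj hqj
      exact hcS (hqj ▸ hmapsW j hj)
    rw [h1, h2]
    simp



lemma sm_sum_apply {ι : Type*} (s : Finset ι) (m : ι → SignedMeasure (ℝ × ℝ))
    (A : Set (ℝ × ℝ)) : (∑ i ∈ s, m i) A = ∑ i ∈ s, m i A := by
  classical
  induction s using Finset.cons_induction with
  | empty => simp
  | cons i s hi ih =>
    rw [Finset.sum_cons, VectorMeasure.add_apply, ih, Finset.sum_cons]

lemma diracS_apply (v : ℝ × ℝ) {A : Set (ℝ × ℝ)} (hA : MeasurableSet A) :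
    diracS v A = if v ∈ A then 1 else 0 := by
  rw [diracS, Measure.toSignedMeasure_apply_measurable hA, measureReal_def, Measure.dirac_apply' v hA]
  by_cases h : v ∈ A
  · simp [h, Set.indicator_of_mem]
  · simp [h, Set.indicator_of_notMem]

lemma atomic_apply {ι : Type*} (s : Finset ι) (P : ι → ℝ × ℝ) (a : ι → ℝ)
    {A : Set (ℝ × ℝ)} (hA : MeasurableSet A) :
    (∑ i ∈ s, a i • diracS (P i)) A = ∑ i ∈ s, if P i ∈ A then a i else 0 := by
  rw [sm_sum_apply]
  refine Finset.sum_congr rfl fun i _ => ?_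
  rw [VectorMeasure.smul_apply, diracS_apply (P i) hA, smul_eq_mul]
  by_cases h : P i ∈ A
  · simp [h]
  · simp [h]

lemma atomic_apply_univ {ι : Type*} (s : Finset ι) (P : ι → ℝ × ℝ) (a : ι → ℝ) :
    (∑ i ∈ s, a i • diracS (P i)) Set.univ = ∑ i ∈ s, a i := by
  rw [atomic_apply s P a MeasurableSet.univ]
  simp

lemma atomic_apply_singleton (V : Finset (ℝ × ℝ)) (a : ℝ × ℝ → ℝ) {v₀ : ℝ × ℝ}
    (hv₀ : v₀ ∈ V) : (∑ v ∈ V, a v • diracS v) {v₀} = a v₀ := by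
  have hre : (∑ v ∈ V, a v • diracS v) = ∑ v ∈ V, a v • diracS (id v) := rfl
  rw [hre, atomic_apply V id a (measurableSet_singleton v₀)]
  simp only [id_eq, Set.mem_singleton_iff]
  rw [Finset.sum_ite_eq' V v₀ a, if_pos hv₀]

lemma sm_apply_jd (X : SignedMeasure (ℝ × ℝ)) {A : Set (ℝ × ℝ)} (hA : MeasurableSet A) :
    X A = (X.toJordanDecomposition.posPart A).toReal
      - (X.toJordanDecomposition.negPart A).toReal := by
  conv_lhs => rw [← X.toSignedMeasure_toJordanDecomposition]
  rw [JordanDecomposition.toSignedMeasure, VectorMeasure.sub_apply,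
    Measure.toSignedMeasure_apply_measurable hA, Measure.toSignedMeasure_apply_measurable hA]
  rfl

lemma tv_univ_eq (X : SignedMeasure (ℝ × ℝ)) :
    X.totalVariation Set.univ = X.toJordanDecomposition.posPart Set.univ
      + X.toJordanDecomposition.negPart Set.univ := by
  rw [SignedMeasure.totalVariation, Measure.add_apply]

lemma tv_pos_atomic {k : ℕ} (w : Fin k → ℝ × ℝ) (α : Fin k → ℝ) (hα : ∀ j, 0 < α j) :
    (∑ j, α j • diracS (w j)).totalVariation Set.univ
      = ENNReal.ofReal (∑ j, α j) := by
  classical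
  set μ₀ : Measure (ℝ × ℝ) := ∑ j, (ENNReal.ofReal (α j)) • Measure.dirac (w j) with hμ₀
  have hfin : IsFiniteMeasure μ₀ := by
    constructor
    rw [hμ₀, Measure.finset_sum_apply]
    refine ENNReal.sum_lt_top.mpr fun j _ => ?_
    simp only [Measure.smul_apply, smul_eq_mul]
    exact ENNReal.mul_lt_top ENNReal.ofReal_lt_top (measure_lt_top _ _)
  have hX : (∑ j, α j • diracS (w j)) = @Measure.toSignedMeasure _ _ μ₀ hfin := by
    ext A hA
    rw [atomic_apply Finset.univ w α hA, Measure.toSignedMeasure_apply_measurable hA]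
    rw [hμ₀, measureReal_def, Measure.finset_sum_apply]
    rw [ENNReal.toReal_sum (fun j _ => by
      simp only [Measure.smul_apply, smul_eq_mul]
      exact (ENNReal.mul_lt_top ENNReal.ofReal_lt_top (measure_lt_top _ _)).ne)]
    refine Finset.sum_congr rfl fun j _ => ?_
    simp only [Measure.smul_apply, smul_eq_mul, Measure.dirac_apply' _ hA]
    by_cases h : w j ∈ A
    · simp [h, Set.indicator_of_mem, ENNReal.toReal_ofReal (hα j).le]
    · simp [h, Set.indicator_of_notMem]
  rw [hX, SignedMeasure.totalVariation, @toJD_tsm _ hfin]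
  simp only [Measure.add_apply]
  have h0 : (0 : Measure (ℝ × ℝ)) Set.univ = 0 := rfl
  rw [h0, add_zero, hμ₀, Measure.finset_sum_apply,
    ENNReal.ofReal_sum_of_nonneg (fun j _ => (hα j).le)]
  refine Finset.sum_congr rfl fun j _ => ?_
  simp [Measure.smul_apply]


lemma dot2_sub (a b u : ℝ × ℝ) : dot2 (a - b) u = dot2 a u - dot2 b u := by
  simp only [dot2, Prod.fst_sub, Prod.snd_sub]; ring

lemma pin_two {θ₀ θ₁ : ℝ} (hs : Real.sin (θ₁ - θ₀) ≠ 0) {d : ℝ × ℝ}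
    (h0 : dot2 d (uperp θ₀) = 0) (h1 : dot2 d (uperp θ₁) = 0) : d = 0 := by
  rw [Real.sin_sub] at hs
  simp only [dot2, uperp] at h0 h1
  have e1 : d.1 * (Real.sin θ₁ * Real.cos θ₀ - Real.cos θ₁ * Real.sin θ₀) = 0 := by
    linear_combination Real.cos θ₀ * h1 - Real.cos θ₁ * h0
  have e2 : d.2 * (Real.sin θ₁ * Real.cos θ₀ - Real.cos θ₁ * Real.sin θ₀) = 0 := by
    linear_combination Real.sin θ₀ * h1 - Real.sin θ₁ * h0
  have hd1 : d.1 = 0 := by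
    rcases mul_eq_zero.mp e1 with h | h
    · exact h
    · exact absurd h hs
  have hd2 : d.2 = 0 := by
    rcases mul_eq_zero.mp e2 with h | h
    · exact h
    · exact absurd h hs
  exact Prod.ext hd1 hd2

/-- numerator of the intersection point of lines `⟨x, uperp θ₀⟩ = c₀`, `⟨x, uperp θ₁⟩ = c₁` -/
def Nvec (θ₀ θ₁ c₀ c₁ : ℝ) : ℝ × ℝ :=
  (c₁ * Real.cos θ₀ - c₀ * Real.cos θ₁, c₁ * Real.sin θ₀ - c₀ * Real.sin θ₁)

lemma Nvec_eq (θ₀ θ₁ : ℝ) (v : ℝ × ℝ) :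
    Nvec θ₀ θ₁ (dot2 v (uperp θ₀)) (dot2 v (uperp θ₁)) = Real.sin (θ₁ - θ₀) • v := by
  apply Prod.ext
  · simp only [Nvec, dot2, uperp, Prod.smul_fst, smul_eq_mul, Real.sin_sub]; ring
  · simp only [Nvec, dot2, uperp, Prod.smul_snd, smul_eq_mul, Real.sin_sub]; ring

lemma dot2_smul_left (c : ℝ) (a b : ℝ × ℝ) : dot2 (c • a) b = c * dot2 a b := by
  simp only [dot2, Prod.smul_fst, Prod.smul_snd, smul_eq_mul]; ring

lemma Nvec_smul_rev {θ₀ θ₁ c₀ c₁ : ℝ} {u : ℝ × ℝ}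
    (h : Nvec θ₀ θ₁ c₀ c₁ = Real.sin (θ₁ - θ₀) • u) (hs : Real.sin (θ₁ - θ₀) ≠ 0) :
    dot2 u (uperp θ₀) = c₀ ∧ dot2 u (uperp θ₁) = c₁ := by
  have h1 := congrArg Prod.fst h
  have h2 := congrArg Prod.snd h
  simp only [Nvec, Prod.smul_fst, Prod.smul_snd, smul_eq_mul, Real.sin_sub] at h1 h2
  rw [Real.sin_sub] at hs
  have hd0 : dot2 u (uperp θ₀) = u.1 * Real.sin θ₀ + u.2 * (-Real.cos θ₀) := by
    simp [dot2, uperp]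
  have hd1 : dot2 u (uperp θ₁) = u.1 * Real.sin θ₁ + u.2 * (-Real.cos θ₁) := by
    simp [dot2, uperp]
  constructor
  · have key : (Real.sin θ₁ * Real.cos θ₀ - Real.cos θ₁ * Real.sin θ₀)
        * ((u.1 * Real.sin θ₀ + u.2 * (-Real.cos θ₀)) - c₀) = 0 := by
      linear_combination Real.cos θ₀ * h2 - Real.sin θ₀ * h1
    rcases mul_eq_zero.mp key with hcase | hcase
    · exact absurd hcase hs
    · rw [hd0]; linarith
  · have key : (Real.sin θ₁ * Real.cos θ₀ - Real.cos θ₁ * Real.sin θ₀)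
        * ((u.1 * Real.sin θ₁ + u.2 * (-Real.cos θ₁)) - c₁) = 0 := by
      linear_combination Real.cos θ₁ * h2 - Real.sin θ₁ * h1
    rcases mul_eq_zero.mp key with hcase | hcase
    · exact absurd hcase hs
    · rw [hd1]; linarith

/-- the (cleared-denominator) concurrency function for three lines -/
def Efull (w₀ w₁ w₂ : ℝ × ℝ) (θ : Fin 3 → ℝ) : ℝ :=
  dot2 (Nvec (θ 0) (θ 1) (dot2 w₀ (uperp (θ 0))) (dot2 w₁ (uperp (θ 1)))
    - Real.sin (θ 1 - θ 0) • w₂) (uperp (θ 2))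

lemma Efull_concur {w₀ w₁ w₂ : ℝ × ℝ} {θ : Fin 3 → ℝ} (v : ℝ × ℝ)
    (h0 : dot2 v (uperp (θ 0)) = dot2 w₀ (uperp (θ 0)))
    (h1 : dot2 v (uperp (θ 1)) = dot2 w₁ (uperp (θ 1)))
    (h2 : dot2 v (uperp (θ 2)) = dot2 w₂ (uperp (θ 2))) :
    Efull w₀ w₁ w₂ θ = 0 := by
  rw [Efull, ← h0, ← h1, Nvec_eq, ← smul_sub, dot2_smul_left, dot2_sub, h2, sub_self, mul_zero]

lemma Efull_sinusoid (w₀ w₁ w₂ : ℝ × ℝ) (θ : Fin 3 → ℝ) :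
    Efull w₀ w₁ w₂ θ
      = (Nvec (θ 0) (θ 1) (dot2 w₀ (uperp (θ 0))) (dot2 w₁ (uperp (θ 1)))
          - Real.sin (θ 1 - θ 0) • w₂).1 * Real.sin (θ 2)
        + (-(Nvec (θ 0) (θ 1) (dot2 w₀ (uperp (θ 0))) (dot2 w₁ (uperp (θ 1)))
          - Real.sin (θ 1 - θ 0) • w₂).2) * Real.cos (θ 2) := by
  rw [Efull]
  set q := Nvec (θ 0) (θ 1) (dot2 w₀ (uperp (θ 0))) (dot2 w₁ (uperp (θ 1)))
    - Real.sin (θ 1 - θ 0) • w₂ with hq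
  show dot2 q (uperp (θ 2)) = _
  simp only [dot2, uperp]
  ring

lemma sInt_sum {ι : Type*} (s : Finset ι) (m : ι → SignedMeasure (ℝ × ℝ))
    {f : ℝ × ℝ → ℝ} (hf : IntAll f) :
    sInt (∑ i ∈ s, m i) f = ∑ i ∈ s, sInt (m i) f := by
  classical
  induction s using Finset.cons_induction with
  | empty => simp [sInt_zero]
  | cons i s hi ih => rw [Finset.sum_cons, sInt_add hf, ih, Finset.sum_cons]

lemma lineProj_sum {D : ℝ × ℝ → ℝ} {f : ℝ → ℝ} {r : ℝ} (hD_cont : Continuous D)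
    (hD_circ : ∀ z, D z = f (norm2 z)) (hD_supp : ∀ z, r < norm2 z → D z = 0)
    {ι : Type*} (s : Finset ι) (P : ι → ℝ × ℝ) (a : ι → ℝ) (θ t : ℝ) :
    lineProj (fun y => ∑ i ∈ s, a i * D (y - P i)) θ t
      = ∑ i ∈ s, a i * gprof D (t - dot2 (P i) (uperp θ)) := by
  have h1 : (fun s' : ℝ => (fun y => ∑ i ∈ s, a i * D (y - P i)) (s' • uvec θ + t • uperp θ))
      = fun s' : ℝ => ∑ i ∈ s, a i
          * D (s' - dot2 (P i) (uvec θ), t - dot2 (P i) (uperp θ)) := by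
    funext s'
    exact Finset.sum_congr rfl fun i _ => by rw [point_decomp θ s' t (P i) hD_circ]
  rw [lineProj, h1, integral_finset_sum s (fun i s' =>
    ((integrable_D_line hD_cont hD_supp (t - dot2 (P i) (uperp θ))).comp_sub_right
      (dot2 (P i) (uvec θ))).const_mul (a i))]
  refine Finset.sum_congr rfl fun i _ => ?_
  rw [integral_const_mul,
    integral_sub_right_eq_self (fun s' : ℝ => D (s', t - dot2 (P i) (uperp θ)))
      (dot2 (P i) (uvec θ))]
  rfl

/-- the set of bad angle triples -/
def BadSet {k : ℕ} (w : Fin k → ℝ × ℝ) : Set (Fin 3 → ℝ) :=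
  {θ | Real.sin (θ 1 - θ 0) = 0}
  ∪ (⋃ (j : Fin k) (j' : Fin k), {θ | j ≠ j' ∧ dot2 (w j - w j') (uperp (θ 0)) = 0})
  ∪ (⋃ (j : Fin k) (j' : Fin k), {θ | j ≠ j' ∧ dot2 (w j - w j') (uperp (θ 1)) = 0})
  ∪ (⋃ (j₀ : Fin k) (j₁ : Fin k) (j₂ : Fin k),
      {θ | j₀ ≠ j₁ ∧ Efull (w j₀) (w j₁) (w j₂) θ = 0 ∧ Real.sin (θ 1 - θ 0) ≠ 0
        ∧ (j₂ = j₀ ∨ dot2 (w j₂ - w j₀) (uperp (θ 0)) ≠ 0)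
        ∧ (j₂ = j₁ ∨ dot2 (w j₂ - w j₁) (uperp (θ 1)) ≠ 0)})

lemma continuous_theta_coord (i : Fin 3) : Continuous fun θ : Fin 3 → ℝ => θ i :=
  continuous_apply i

lemma continuous_sin_diff : Continuous fun θ : Fin 3 → ℝ => Real.sin (θ 1 - θ 0) := by
  fun_prop

lemma continuous_dot_uperp (d : ℝ × ℝ) (i : Fin 3) :
    Continuous fun θ : Fin 3 → ℝ => dot2 d (uperp (θ i)) := by
  simp only [dot2, uperp]
  fun_prop

lemma continuous_Efull (w₀ w₁ w₂ : ℝ × ℝ) :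
    Continuous fun θ : Fin 3 → ℝ => Efull w₀ w₁ w₂ θ := by
  simp only [Efull, Nvec, dot2, uperp, Prod.fst_sub, Prod.snd_sub, Prod.smul_fst,
    Prod.smul_snd, smul_eq_mul]
  fun_prop

lemma upd_same (i : Fin 3) (θ : Fin 3 → ℝ) (t : ℝ) : Function.update θ i t i = t :=
  Function.update_self i t θ

lemma upd_ne {i j : Fin 3} (hij : j ≠ i) (θ : Fin 3 → ℝ) (t : ℝ) :
    Function.update θ i t j = θ j := Function.update_of_ne hij t θ

lemma sinusoid_setOf_null {a b : ℝ} (hab : ¬ (a = 0 ∧ b = 0)) {s : Set ℝ}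
    (hs : s ⊆ {t : ℝ | a * Real.sin t + b * Real.cos t = 0}) : volume s = 0 :=
  measure_mono_null hs (sinusoid_null a b hab)

lemma BadSet_null {k : ℕ} (w : Fin k → ℝ × ℝ) (hw : ∀ j j', j ≠ j' → w j ≠ w j') :
    Measure.pi (fun _ : Fin 3 => unif) (BadSet w) = 0 := by
  rw [BadSet]
  refine measure_union_null (measure_union_null (measure_union_null ?_ ?_) ?_) ?_
  · -- parallel directions 0,1 : slice along coordinate 1
    refine pi3_null_slice 1 _ ((isClosed_eq continuous_sin_diff continuous_const).measurableSet)
      fun θ => ?_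
    refine sinusoid_setOf_null (a := Real.cos (θ 0)) (b := -Real.sin (θ 0)) ?_ ?_
    · rintro ⟨h1, h2⟩
      nlinarith [Real.sin_sq_add_cos_sq (θ 0)]
    · intro t ht
      simp only [Set.mem_setOf_eq, upd_same, upd_ne (by decide : (0 : Fin 3) ≠ 1)] at ht
      rw [Real.sin_sub] at ht
      simp only [Set.mem_setOf_eq]
      linarith
  · -- coordinate 0 injectivity
    refine measure_iUnion_null fun j => measure_iUnion_null fun j' => ?_
    by_cases hjj : j = j'
    · have : {θ : Fin 3 → ℝ | j ≠ j' ∧ dot2 (w j - w j') (uperp (θ 0)) = 0} = ∅ := by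
        ext θ; simp [hjj]
      rw [this]; exact measure_empty
    · have hset : {θ : Fin 3 → ℝ | j ≠ j' ∧ dot2 (w j - w j') (uperp (θ 0)) = 0}
          = {θ : Fin 3 → ℝ | dot2 (w j - w j') (uperp (θ 0)) = 0} := by
        ext θ; simp [hjj]
      rw [hset]
      refine pi3_null_slice 0 _
        ((isClosed_eq (continuous_dot_uperp _ 0) continuous_const).measurableSet) fun θ => ?_
      have hd : w j - w j' ≠ 0 := sub_ne_zero.mpr (hw j j' hjj)
      refine sinusoid_setOf_null (a := (w j - w j').1) (b := -(w j - w j').2) ?_ ?_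
      · rintro ⟨h1, h2⟩
        exact hd (Prod.ext h1 (neg_eq_zero.mp h2))
      · intro t ht
        simp only [Set.mem_setOf_eq, upd_same] at ht
        simp only [dot2, uperp] at ht
        simp only [Set.mem_setOf_eq]
        linarith
  · -- coordinate 1 injectivity
    refine measure_iUnion_null fun j => measure_iUnion_null fun j' => ?_
    by_cases hjj : j = j'
    · have : {θ : Fin 3 → ℝ | j ≠ j' ∧ dot2 (w j - w j') (uperp (θ 1)) = 0} = ∅ := by
        ext θ; simp [hjj]
      rw [this]; exact measure_empty
    · have hset : {θ : Fin 3 → ℝ | j ≠ j' ∧ dot2 (w j - w j') (uperp (θ 1)) = 0}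
          = {θ : Fin 3 → ℝ | dot2 (w j - w j') (uperp (θ 1)) = 0} := by
        ext θ; simp [hjj]
      rw [hset]
      refine pi3_null_slice 1 _
        ((isClosed_eq (continuous_dot_uperp _ 1) continuous_const).measurableSet) fun θ => ?_
      have hd : w j - w j' ≠ 0 := sub_ne_zero.mpr (hw j j' hjj)
      refine sinusoid_setOf_null (a := (w j - w j').1) (b := -(w j - w j').2) ?_ ?_
      · rintro ⟨h1, h2⟩
        exact hd (Prod.ext h1 (neg_eq_zero.mp h2))
      · intro t ht
        simp only [Set.mem_setOf_eq, upd_same] at ht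
        simp only [dot2, uperp] at ht
        simp only [Set.mem_setOf_eq]
        linarith
  · -- spurious concurrences
    refine measure_iUnion_null fun j₀ => measure_iUnion_null fun j₁ =>
      measure_iUnion_null fun j₂ => ?_
    have hmeas : MeasurableSet {θ : Fin 3 → ℝ | j₀ ≠ j₁ ∧ Efull (w j₀) (w j₁) (w j₂) θ = 0
        ∧ Real.sin (θ 1 - θ 0) ≠ 0
        ∧ (j₂ = j₀ ∨ dot2 (w j₂ - w j₀) (uperp (θ 0)) ≠ 0)
        ∧ (j₂ = j₁ ∨ dot2 (w j₂ - w j₁) (uperp (θ 1)) ≠ 0)} := by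
      simp only [Set.setOf_and, Set.setOf_or]
      refine (MeasurableSet.const _).inter (MeasurableSet.inter ?_ (MeasurableSet.inter ?_
        (MeasurableSet.inter (MeasurableSet.union (MeasurableSet.const _) ?_)
          (MeasurableSet.union (MeasurableSet.const _) ?_))))
      · exact (isClosed_eq (continuous_Efull _ _ _) continuous_const).measurableSet
      · exact ((isClosed_eq continuous_sin_diff continuous_const).measurableSet).compl
      · exact ((isClosed_eq (continuous_dot_uperp _ 0) continuous_const).measurableSet).compl
      · exact ((isClosed_eq (continuous_dot_uperp _ 1) continuous_const).measurableSet).compl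
    refine pi3_null_slice 2 _ hmeas fun θ => ?_
    simp only [Set.mem_setOf_eq]
    -- the slice in the third angle
    have hc0 : ∀ t, Function.update θ 2 t 0 = θ 0 := upd_ne (by decide) θ
    have hc1 : ∀ t, Function.update θ 2 t 1 = θ 1 := upd_ne (by decide) θ
    by_cases hj01 : j₀ = j₁
    · have : {t : ℝ | j₀ ≠ j₁ ∧ Efull (w j₀) (w j₁) (w j₂) (Function.update θ 2 t) = 0
          ∧ Real.sin (Function.update θ 2 t 1 - Function.update θ 2 t 0) ≠ 0
          ∧ (j₂ = j₀ ∨ dot2 (w j₂ - w j₀) (uperp (Function.update θ 2 t 0)) ≠ 0)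
          ∧ (j₂ = j₁ ∨ dot2 (w j₂ - w j₁) (uperp (Function.update θ 2 t 1)) ≠ 0)} = ∅ := by
        ext t; simp [hj01]
      rw [this]; exact measure_empty
    by_cases hs0 : Real.sin (θ 1 - θ 0) = 0
    · have : {t : ℝ | j₀ ≠ j₁ ∧ Efull (w j₀) (w j₁) (w j₂) (Function.update θ 2 t) = 0
          ∧ Real.sin (Function.update θ 2 t 1 - Function.update θ 2 t 0) ≠ 0
          ∧ (j₂ = j₀ ∨ dot2 (w j₂ - w j₀) (uperp (Function.update θ 2 t 0)) ≠ 0)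
          ∧ (j₂ = j₁ ∨ dot2 (w j₂ - w j₁) (uperp (Function.update θ 2 t 1)) ≠ 0)} = ∅ := by
        ext t
        simp only [Set.mem_setOf_eq, Set.mem_empty_iff_false, iff_false, not_and]
        intro _ _ h
        exact absurd (hc1 t ▸ hc0 t ▸ hs0) h
      rw [this]; exact measure_empty
    by_cases h20 : j₂ = j₀ ∨ dot2 (w j₂ - w j₀) (uperp (θ 0)) ≠ 0
    swap
    · have : {t : ℝ | j₀ ≠ j₁ ∧ Efull (w j₀) (w j₁) (w j₂) (Function.update θ 2 t) = 0
          ∧ Real.sin (Function.update θ 2 t 1 - Function.update θ 2 t 0) ≠ 0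
          ∧ (j₂ = j₀ ∨ dot2 (w j₂ - w j₀) (uperp (Function.update θ 2 t 0)) ≠ 0)
          ∧ (j₂ = j₁ ∨ dot2 (w j₂ - w j₁) (uperp (Function.update θ 2 t 1)) ≠ 0)} = ∅ := by
        ext t
        simp only [Set.mem_setOf_eq, Set.mem_empty_iff_false, iff_false, not_and]
        intro _ _ _ h _
        exact h20 (by rwa [hc0 t] at h)
      rw [this]; exact measure_empty
    by_cases h21 : j₂ = j₁ ∨ dot2 (w j₂ - w j₁) (uperp (θ 1)) ≠ 0
    swap
    · have : {t : ℝ | j₀ ≠ j₁ ∧ Efull (w j₀) (w j₁) (w j₂) (Function.update θ 2 t) = 0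
          ∧ Real.sin (Function.update θ 2 t 1 - Function.update θ 2 t 0) ≠ 0
          ∧ (j₂ = j₀ ∨ dot2 (w j₂ - w j₀) (uperp (Function.update θ 2 t 0)) ≠ 0)
          ∧ (j₂ = j₁ ∨ dot2 (w j₂ - w j₁) (uperp (Function.update θ 2 t 1)) ≠ 0)} = ∅ := by
        ext t
        simp only [Set.mem_setOf_eq, Set.mem_empty_iff_false, iff_false, not_and]
        intro _ _ _ _ h
        exact h21 (by rwa [hc1 t] at h)
      rw [this]; exact measure_empty
    -- main case : coefficient vector is nonzero
    set q : ℝ × ℝ := Nvec (θ 0) (θ 1) (dot2 (w j₀) (uperp (θ 0))) (dot2 (w j₁) (uperp (θ 1)))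
      - Real.sin (θ 1 - θ 0) • w j₂ with hq
    have hqne : q ≠ 0 := by
      intro hq0
      have hNs : Nvec (θ 0) (θ 1) (dot2 (w j₀) (uperp (θ 0))) (dot2 (w j₁) (uperp (θ 1)))
          = Real.sin (θ 1 - θ 0) • w j₂ := by
        have := sub_eq_zero.mp (hq ▸ hq0)
        exact this
      obtain ⟨e0, e1⟩ := Nvec_smul_rev hNs hs0
      rcases h20 with h20 | h20
      · rcases h21 with h21 | h21
        · exact hj01 (h20 ▸ h21 ▸ rfl)
        · exact h21 (by rw [dot2_sub, e1, sub_self])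
      · exact h20 (by rw [dot2_sub, e0, sub_self])
    refine sinusoid_setOf_null (a := q.1) (b := -q.2) ?_ ?_
    · rintro ⟨h1, h2⟩
      exact hqne (Prod.ext h1 (neg_eq_zero.mp h2))
    · intro t ht
      simp only [Set.mem_setOf_eq] at ht ⊢
      obtain ⟨-, hE, -, -, -⟩ := ht
      rw [Efull_sinusoid] at hE
      rw [hc0, hc1, upd_same] at hE
      rw [← hq] at hE
      linarith [hE]

/-- with probability at least `1 - C` over three i.i.d. uniform scan angles,
`X₀` (k well-separated small discs) is the unique TV minimizer among finitely-atomic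
signed measures consistent with the three line projections. -/
theorem three_line_scans_recovery
    (C : ℝ) (hC0 : 0 < C) (hC1 : C < 1)
    (k : ℕ) (hk : 2 ≤ k) (r : ℝ) (hr : 0 < r)
    (D : ℝ × ℝ → ℝ) (hD_cont : Continuous D)
    (f : ℝ → ℝ) (hD_circ : ∀ w, D w = f (norm2 w))
    (hD_nonneg : ∀ w, 0 ≤ D w) (hD_ne : D ≠ 0)
    (hD_supp : ∀ w, r < norm2 w → D w = 0)
    (w : Fin k → ℝ × ℝ) (α : Fin k → ℝ) (hα : ∀ j, 0 < α j)
    (hsep : ∀ i j, i ≠ j → (2 / C) * (k : ℝ) ^ 2 * r ≤ norm2 (w i - w j))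
    (X₀ : SignedMeasure (ℝ × ℝ)) (hX₀ : X₀ = ∑ j, α j • diracS (w j)) :
    ENNReal.ofReal (1 - C) ≤
      Measure.pi (fun _ : Fin 3 => unif)
        {θv : Fin 3 → ℝ |
          ∀ (W' : Finset (ℝ × ℝ)) (α' : ℝ × ℝ → ℝ) (X : SignedMeasure (ℝ × ℝ)),
            (∀ v ∈ W', α' v ≠ 0) →
            X = ∑ v ∈ W', α' v • diracS v →
            (∀ i : Fin 3, ∀ t : ℝ,
              lineProj (fun y => sInt X (fun v => D (y - v))) (θv i) t
                = lineProj (fun y => sInt X₀ (fun v => D (y - v))) (θv i) t) →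
            X₀.totalVariation Set.univ ≤ X.totalVariation Set.univ ∧
              (X.totalVariation Set.univ = X₀.totalVariation Set.univ → X = X₀)} := by
  classical
  -- injectivity of the atom positions
  have hk0 : (0 : ℝ) < (k : ℝ) := by
    have : (0 : ℕ) < k := lt_of_lt_of_le (by norm_num) hk
    exact_mod_cast this
  have hsep_pos : (0 : ℝ) < (2 / C) * (k : ℝ) ^ 2 * r := by positivity
  have hwne : ∀ i j : Fin k, i ≠ j → w i ≠ w j := by
    intro i j hij heq
    have h1 := hsep i j hij
    rw [heq, sub_self] at h1
    have h0 : norm2 (0 : ℝ × ℝ) = 0 := by simp [norm2]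
    rw [h0] at h1
    linarith
  -- bounds and integrability facts about D
  obtain ⟨M, hM⟩ := D_bound hD_cont hD_supp
  have hIntAll : ∀ y : ℝ × ℝ, IntAll fun v => D (y - v) := fun y =>
    intAll_of_bounded (hD_cont.comp (continuous_const.sub continuous_id)) M fun z => hM _
  -- the 1-D profile g and its right edge
  set g : ℝ → ℝ := gprof D with hg
  have hgne : {τ : ℝ | g τ ≠ 0}.Nonempty :=
    gprof_ne_zero hD_cont hD_nonneg hD_ne hD_supp
  have hgbdd : BddAbove {τ : ℝ | g τ ≠ 0} := by
    refine ⟨r, fun τ hτ => ?_⟩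
    by_contra hlt
    push_neg at hlt
    exact hτ (gprof_zero_of_abs_gt hD_supp (lt_of_lt_of_le hlt (le_abs_self τ)))
  set sS : ℝ := sSup {τ : ℝ | g τ ≠ 0} with hsS
  have hedge0 : ∀ x, sS < x → g x = 0 := by
    intro x hx
    by_contra hgx
    exact absurd (le_csSup hgbdd hgx) (not_le.mpr hx)
  have hedgene : ∀ ε, 0 < ε → ∃ τ, sS - ε < τ ∧ g τ ≠ 0 := by
    intro ε hε
    obtain ⟨τ, hτmem, hτlt⟩ := exists_lt_of_lt_csSup hgne (show sS - ε < sS by linarith)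
    exact ⟨τ, hτlt, hτmem⟩
  -- total masses
  set Stot : ℝ := ∑ j, α j with hSdef
  have hS0 : 0 ≤ Stot := Finset.sum_nonneg fun j _ => (hα j).le
  have htv0 : X₀.totalVariation Set.univ = ENNReal.ofReal Stot := by
    rw [hX₀]; exact tv_pos_atomic w α hα
  -- the recovery property holds outside the bad set
  have hsub : (BadSet w)ᶜ ⊆ {θv : Fin 3 → ℝ |
      ∀ (W' : Finset (ℝ × ℝ)) (α' : ℝ × ℝ → ℝ) (X : SignedMeasure (ℝ × ℝ)),
        (∀ v ∈ W', α' v ≠ 0) →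
        X = ∑ v ∈ W', α' v • diracS v →
        (∀ i : Fin 3, ∀ t : ℝ,
          lineProj (fun y => sInt X (fun v => D (y - v))) (θv i) t
            = lineProj (fun y => sInt X₀ (fun v => D (y - v))) (θv i) t) →
        X₀.totalVariation Set.univ ≤ X.totalVariation Set.univ ∧
          (X.totalVariation Set.univ = X₀.totalVariation Set.univ → X = X₀)} := by
    intro θv hθv
    simp only [BadSet, Set.mem_compl_iff, Set.mem_union, Set.mem_iUnion, not_or,
      not_exists, Set.mem_setOf_eq] at hθv
    obtain ⟨⟨⟨hG1, hI0⟩, hI1⟩, hB2⟩ := hθv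
    intro W' α' X hα'ne hXeq hproj
    set p : Fin 3 → (ℝ × ℝ) → ℝ := fun i v => dot2 v (uperp (θv i)) with hp
    have hInj0 : ∀ j j' : Fin k, j ≠ j' → p 0 (w j) ≠ p 0 (w j') := by
      intro j j' hjj heq
      exact hI0 j j' ⟨hjj, by rw [dot2_sub]; simp only [hp] at heq; rw [heq, sub_self]⟩
    have hInj1 : ∀ j j' : Fin k, j ≠ j' → p 1 (w j) ≠ p 1 (w j') := by
      intro j j' hjj heq
      exact hI1 j j' ⟨hjj, by rw [dot2_sub]; simp only [hp] at heq; rw [heq, sub_self]⟩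
    -- reduce sInt to finite sums
    have hXfun : (fun y => sInt X fun v => D (y - v))
        = fun y => ∑ v ∈ W', α' v * D (y - id v) := by
      funext y
      rw [hXeq, sInt_sum W' _ (hIntAll y)]
      refine Finset.sum_congr rfl fun v _ => ?_
      rw [sInt_smul (hIntAll y),
        sInt_dirac (f := fun v => D (y - v)) (hD_cont.comp (continuous_const.sub continuous_id)) v]
      simp only [id_eq]
    have hX₀fun : (fun y => sInt X₀ fun v => D (y - v))
        = fun y => ∑ j, α j * D (y - w j) := by
      funext y
      rw [hX₀, sInt_sum Finset.univ _ (hIntAll y)]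
      refine Finset.sum_congr rfl fun j _ => ?_
      rw [sInt_smul (hIntAll y),
        sInt_dirac (f := fun v => D (y - v)) (hD_cont.comp (continuous_const.sub continuous_id)) (w j)]
    -- the matching projections, atom by atom
    have hcon : ∀ i : Fin 3, ∀ t : ℝ,
        ∑ v ∈ W', α' v * g (t - p i v) = ∑ j, α j * g (t - p i (w j)) := by
      intro i t
      have h := hproj i t
      rw [hXfun, hX₀fun, lineProj_sum hD_cont hD_circ hD_supp W' id α' (θv i) t,
        lineProj_sum hD_cont hD_circ hD_supp Finset.univ w α (θv i) t] at h
      simpa only [id_eq] using h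
    have hfib : ∀ i : Fin 3, ∀ c : ℝ,
        ∑ v ∈ W'.filter fun v => p i v = c, α' v
          = ∑ j ∈ Finset.univ.filter fun j => p i (w j) = c, α j := fun i =>
      matching_fibers g sS hedge0 hedgene W' α' (p i) Finset.univ α (fun j => p i (w j)) (hcon i)
    -- total masses agree
    have hmass : ∑ v ∈ W', α' v = Stot := by
      have hmapsV : ∀ v ∈ W', p 0 v ∈ W'.image (p 0) ∪ Finset.univ.image fun j => p 0 (w j) :=
        fun v hv => Finset.mem_union_left _ (Finset.mem_image_of_mem _ hv)
      have hmapsW : ∀ j ∈ (Finset.univ : Finset (Fin k)),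
          p 0 (w j) ∈ W'.image (p 0) ∪ Finset.univ.image fun j => p 0 (w j) :=
        fun j hj => Finset.mem_union_right _ (Finset.mem_image_of_mem _ hj)
      rw [hSdef, ← Finset.sum_fiberwise_of_maps_to hmapsV α',
        ← Finset.sum_fiberwise_of_maps_to hmapsW α]
      exact Finset.sum_congr rfl fun c _ => hfib 0 c
    -- apply X to the whole space
    have hXu : X Set.univ = Stot := by
      rw [hXeq]
      have hre : (∑ v ∈ W', α' v • diracS v) = ∑ v ∈ W', α' v • diracS (id v) := rfl
      rw [hre, atomic_apply_univ W' id α', hmass]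
    have hXjd := sm_apply_jd X MeasurableSet.univ
    have htvX := tv_univ_eq X
    -- total-variation inequality
    have hl : ENNReal.ofReal Stot ≤ X.toJordanDecomposition.posPart Set.univ := by
      have h1 : Stot ≤ (X.toJordanDecomposition.posPart Set.univ).toReal := by
        have := ENNReal.toReal_nonneg (a := X.toJordanDecomposition.negPart Set.univ)
        rw [hXu] at hXjd
        linarith
      calc ENNReal.ofReal Stot ≤ ENNReal.ofReal (X.toJordanDecomposition.posPart Set.univ).toReal :=
            ENNReal.ofReal_le_ofReal h1
        _ = X.toJordanDecomposition.posPart Set.univ := ENNReal.ofReal_toReal (measure_ne_top _ _)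
    have hineq : X₀.totalVariation Set.univ ≤ X.totalVariation Set.univ := by
      rw [htv0, htvX]
      exact le_trans hl le_self_add
    refine ⟨hineq, ?_⟩
    intro hTVeq
    -- equality forces the negative part to vanish
    have hNz : (X.toJordanDecomposition.negPart Set.univ).toReal = 0 := by
      have h2 : (X.toJordanDecomposition.posPart Set.univ).toReal
          + (X.toJordanDecomposition.negPart Set.univ).toReal = Stot := by
        have h3 : X.toJordanDecomposition.posPart Set.univ
            + X.toJordanDecomposition.negPart Set.univ = ENNReal.ofReal Stot := by
          rw [← htvX, hTVeq, htv0]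
        have h4 := congrArg ENNReal.toReal h3
        rw [ENNReal.toReal_add (measure_ne_top _ _) (measure_ne_top _ _),
          ENNReal.toReal_ofReal hS0] at h4
        exact h4
      rw [hXu] at hXjd
      linarith
    have hneg0 : X.toJordanDecomposition.negPart Set.univ = 0 := by
      rcases (ENNReal.toReal_eq_zero_iff _).mp hNz with h | h
      · exact h
      · exact absurd h (measure_ne_top _ _)
    -- all weights are positive
    have hpos : ∀ v ∈ W', 0 < α' v := by
      intro v hv
      rcases lt_or_ge 0 (α' v) with h | h
      · exact h
      exfalso
      have hXv : X {v} = α' v := by rw [hXeq]; exact atomic_apply_singleton W' α' hv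
      have hjdv := sm_apply_jd X (measurableSet_singleton v)
      have hnegv : X.toJordanDecomposition.negPart {v} = 0 :=
        le_antisymm (hneg0 ▸ measure_mono (Set.subset_univ _)) (by positivity)
      rw [hXv, hnegv] at hjdv
      simp only [ENNReal.toReal_zero, sub_zero] at hjdv
      have hge := ENNReal.toReal_nonneg (a := X.toJordanDecomposition.posPart {v})
      have hne := hα'ne v hv
      rw [hjdv] at h
      have h0' : (X.toJordanDecomposition.posPart {v}).toReal = 0 := le_antisymm h hge
      exact hne (by rw [hjdv, h0'])
    -- every atom of X is one of the w j
    have hvw : ∀ v ∈ W', ∃ j : Fin k, v = w j := by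
      intro v hv
      have hfilter : ∀ i : Fin 3, ∃ j : Fin k, p i (w j) = p i v := by
        intro i
        have hLpos : 0 < ∑ v' ∈ W'.filter fun v' => p i v' = p i v, α' v' :=
          Finset.sum_pos (fun v' hv' => hpos v' (Finset.mem_filter.mp hv').1)
            ⟨v, Finset.mem_filter.mpr ⟨hv, rfl⟩⟩
        have hRne : (∑ j ∈ Finset.univ.filter fun j => p i (w j) = p i v, α j) ≠ 0 := by
          rw [← hfib i (p i v)]
          exact hLpos.ne'
        obtain ⟨j, hj⟩ := Finset.nonempty_of_sum_ne_zero hRne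
        exact ⟨j, (Finset.mem_filter.mp hj).2⟩
      obtain ⟨j₀, hj₀⟩ := hfilter 0
      obtain ⟨j₁, hj₁⟩ := hfilter 1
      obtain ⟨j₂, hj₂⟩ := hfilter 2
      by_cases hj01 : j₀ = j₁
      · refine ⟨j₀, ?_⟩
        have h0' : dot2 (v - w j₀) (uperp (θv 0)) = 0 := by
          rw [dot2_sub]
          simp only [hp] at hj₀
          rw [hj₀, sub_self]
        have h1' : dot2 (v - w j₀) (uperp (θv 1)) = 0 := by
          rw [dot2_sub]
          simp only [hp] at hj₁
          rw [hj01, hj₁, sub_self]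
        have := pin_two hG1 h0' h1'
        exact sub_eq_zero.mp this
      · exfalso
        refine hB2 j₀ j₁ j₂ ⟨hj01, ?_, hG1, ?_, ?_⟩
        · exact Efull_concur v hj₀.symm hj₁.symm hj₂.symm
        · by_cases h : j₂ = j₀
          · exact Or.inl h
          · refine Or.inr fun hdot => ?_
            exact hInj0 j₂ j₀ h (by rw [dot2_sub] at hdot; linarith [hdot])
        · by_cases h : j₂ = j₁
          · exact Or.inl h
          · refine Or.inr fun hdot => ?_
            exact hInj1 j₂ j₁ h (by rw [dot2_sub] at hdot; linarith [hdot])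
    -- and every w j is an atom of X with the right weight
    have hwv : ∀ j : Fin k, w j ∈ W' ∧ α' (w j) = α j := by
      intro j
      have hfj := hfib 0 (p 0 (w j))
      have hRHS : (∑ j' ∈ Finset.univ.filter fun j' => p 0 (w j') = p 0 (w j), α j') = α j := by
        have hfil : (Finset.univ.filter fun j' => p 0 (w j') = p 0 (w j)) = {j} := by
          ext j'
          simp only [Finset.mem_filter, Finset.mem_univ, true_and, Finset.mem_singleton]
          constructor
          · intro h
            by_contra hnej
            exact hInj0 j' j hnej h
          · rintro rfl; rfl
        rw [hfil, Finset.sum_singleton]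
      have hsubW : (W'.filter fun v => p 0 v = p 0 (w j)) ⊆ {w j} := by
        intro v hvmem
        obtain ⟨hv1, hv2⟩ := Finset.mem_filter.mp hvmem
        obtain ⟨j', rfl⟩ := hvw v hv1
        have : j' = j := by
          by_contra hnej
          exact hInj0 j' j hnej hv2
        rw [this]
        exact Finset.mem_singleton_self _
      by_cases hmem : w j ∈ W'
      · have hfil' : (W'.filter fun v => p 0 v = p 0 (w j)) = {w j} := by
          refine Finset.Subset.antisymm hsubW ?_
          intro x hx
          rw [Finset.mem_singleton.mp hx]
          exact Finset.mem_filter.mpr ⟨hmem, rfl⟩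
        rw [hfil', Finset.sum_singleton, hRHS] at hfj
        exact ⟨hmem, hfj⟩
      · exfalso
        have hfil' : (W'.filter fun v => p 0 v = p 0 (w j)) = ∅ := by
          rw [Finset.eq_empty_iff_forall_notMem]
          intro x hx
          have := Finset.mem_singleton.mp (hsubW hx)
          exact hmem (this ▸ (Finset.mem_filter.mp hx).1)
        rw [hfil', Finset.sum_empty, hRHS] at hfj
        exact (hα j).ne hfj
    -- conclude X = X₀
    have hW'eq : W' = Finset.image w Finset.univ := by
      apply Finset.Subset.antisymm
      · intro v hv
        obtain ⟨j, rfl⟩ := hvw v hv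
        exact Finset.mem_image_of_mem w (Finset.mem_univ j)
      · intro v hv
        obtain ⟨j, _, rfl⟩ := Finset.mem_image.mp hv
        exact (hwv j).1
    rw [hXeq, hX₀, hW'eq]
    rw [Finset.sum_image (fun i _ j _ h => by
      by_contra hne
      exact hwne i j hne h)]
    exact Finset.sum_congr rfl fun j _ => by rw [(hwv j).2]
  -- measure-theoretic conclusion
  have hbad := BadSet_null w hwne
  have huniv : Measure.pi (fun _ : Fin 3 => unif) Set.univ = 1 := by
    simp [Measure.pi_univ, unif_univ]
  have hcompl : Measure.pi (fun _ : Fin 3 => unif)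
      ({θv : Fin 3 → ℝ | ∀ (W' : Finset (ℝ × ℝ)) (α' : ℝ × ℝ → ℝ) (X : SignedMeasure (ℝ × ℝ)),
        (∀ v ∈ W', α' v ≠ 0) →
        X = ∑ v ∈ W', α' v • diracS v →
        (∀ i : Fin 3, ∀ t : ℝ,
          lineProj (fun y => sInt X (fun v => D (y - v))) (θv i) t
            = lineProj (fun y => sInt X₀ (fun v => D (y - v))) (θv i) t) →
        X₀.totalVariation Set.univ ≤ X.totalVariation Set.univ ∧
          (X.totalVariation Set.univ = X₀.totalVariation Set.univ → X = X₀)}ᶜ) = 0 := by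
    refine measure_mono_null ?_ hbad
    intro θv hθv
    by_contra hbad'
    exact hθv (hsub hbad')
  calc ENNReal.ofReal (1 - C) ≤ 1 := ENNReal.ofReal_le_one.mpr (by linarith)
    _ ≤ _ := by
      have hle := measure_union_le (μ := Measure.pi fun _ : Fin 3 => unif)
        {θv : Fin 3 → ℝ | ∀ (W' : Finset (ℝ × ℝ)) (α' : ℝ × ℝ → ℝ) (X : SignedMeasure (ℝ × ℝ)),
          (∀ v ∈ W', α' v ≠ 0) →
          X = ∑ v ∈ W', α' v • diracS v →
          (∀ i : Fin 3, ∀ t : ℝ,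
            lineProj (fun y => sInt X (fun v => D (y - v))) (θv i) t
              = lineProj (fun y => sInt X₀ (fun v => D (y - v))) (θv i) t) →
          X₀.totalVariation Set.univ ≤ X.totalVariation Set.univ ∧
            (X.totalVariation Set.univ = X₀.totalVariation Set.univ → X = X₀)}
        {θv : Fin 3 → ℝ | ∀ (W' : Finset (ℝ × ℝ)) (α' : ℝ × ℝ → ℝ) (X : SignedMeasure (ℝ × ℝ)),
          (∀ v ∈ W', α' v ≠ 0) →
          X = ∑ v ∈ W', α' v • diracS v →
          (∀ i : Fin 3, ∀ t : ℝ,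
            lineProj (fun y => sInt X (fun v => D (y - v))) (θv i) t
              = lineProj (fun y => sInt X₀ (fun v => D (y - v))) (θv i) t) →
          X₀.totalVariation Set.univ ≤ X.totalVariation Set.univ ∧
            (X.totalVariation Set.univ = X₀.totalVariation Set.univ → X = X₀)}ᶜ
      rw [Set.union_compl_self, huniv, hcompl, add_zero] at hle
      exact hle
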